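/- Let a and n be positive integers, let w_1, …, w_n be nonzero integers each of absolute value at least a, let λ = #{j : w_j < 0}, let ν(a) = #{j : w_j = a} and ν(−a) = #{j : w_j = −a}, and fix k ∈ {0, …, n}. In the ring ℤ⟦t⟧ of formal power series over ℤ, the element ∏_{j=1}^n (1 − t^{|w_j|}) has constant coefficient 1 and hence is a unit; let G = F · (∏_{j=1}^n (1 − t^{|w_j|}))^{−1}, where F ∈ ℤ[t] is the polynomial whose coefficients agree with those of the Laurent polynomial e_k(t^{w_1}, …, t^{w_n}) · ∏_{j : w_j < 0} t^{−w_j}. Then: the coefficient of t^0 in G is 1 if λ = k and 0 otherwise; the coefficient of t^i in G is 0 for every i with 0 < i < a; and the coefficient of t^a in G equals ν(a) if λ = k − 1, equals ν(a) + ν(−a) if λ = k, equals ν(−a) if λ = k + 1, and equals 0 otherwise. -/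

import Mathlib

open Finset LaurentPolynomial

section Aux

lemma aux_prodT {n : ℕ} (w : Fin n → ℤ) (S : Finset (Fin n)) :
    ∏ j ∈ S, (T (w j) : LaurentPolynomial ℤ) = T (∑ j ∈ S, w j) := by
  induction S using Finset.induction with
  | empty => simp
  | insert _ _ h ih =>
      rw [Finset.prod_insert h, Finset.sum_insert h, ih, ← T_add]

lemma aux_Tapply (m i : ℤ) : (T m : LaurentPolynomial ℤ).coeff i = if m = i then 1 else 0 := by
  exact T_apply i m

lemma aux_coeffL {n : ℕ} (w : Fin n → ℤ) (k : ℕ) (i : ℤ) :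
    ((∑ S ∈ (univ : Finset (Fin n)).powersetCard k, ∏ j ∈ S, T (w j)) *
        ∏ j ∈ (univ : Finset (Fin n)).filter fun j => w j < 0,
          T (-(w j)) : LaurentPolynomial ℤ).coeff i
    = ∑ S ∈ (univ : Finset (Fin n)).powersetCard k,
        (if (∑ j ∈ S, w j) +
            (∑ j ∈ (univ : Finset (Fin n)).filter (fun j => w j < 0), -(w j)) = i
          then 1 else 0) := by
  rw [Finset.sum_mul]
  rw [show ((∑ S ∈ (univ : Finset (Fin n)).powersetCard k,
      (∏ j ∈ S, T (w j)) * ∏ j ∈ (univ : Finset (Fin n)).filter fun j => w j < 0,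
        T (-(w j))) : LaurentPolynomial ℤ)
    = ∑ S ∈ (univ : Finset (Fin n)).powersetCard k,
        T ((∑ j ∈ S, w j) + ∑ j ∈ (univ : Finset (Fin n)).filter (fun j => w j < 0), -(w j))
    from Finset.sum_congr rfl fun S _ => by rw [aux_prodT, aux_prodT, ← T_add]]
  rw [AddMonoidAlgebra.coeff_sum, Finsupp.finset_sum_apply]
  exact Finset.sum_congr rfl fun S _ => aux_Tapply _ _

lemma aux_coeff_prodD {a : ℕ} (ha : 0 < a) {α : Type*} [DecidableEq α] (s : Finset α)
    (m : α → ℕ) (hm : ∀ j ∈ s, a ≤ m j) :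
    (PowerSeries.coeff 0 (∏ j ∈ s, (1 - (PowerSeries.X : PowerSeries ℤ) ^ m j)) = 1) ∧
    (∀ i : ℕ, 0 < i → i < a →
      PowerSeries.coeff i (∏ j ∈ s, (1 - (PowerSeries.X : PowerSeries ℤ) ^ m j)) = 0) ∧
    (PowerSeries.coeff a (∏ j ∈ s, (1 - (PowerSeries.X : PowerSeries ℤ) ^ m j))
      = -((s.filter fun j => m j = a).card : ℤ)) := by
  induction s using Finset.induction with
  | empty =>
      refine ⟨by simp, fun i hi hia => by simp; omega, by simp; omega⟩
  | @insert b s hb ih =>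
      obtain ⟨ih0, ihmid, iha⟩ := ih (fun j hj => hm j (Finset.mem_insert_of_mem hj))
      have hmb : a ≤ m b := hm b (Finset.mem_insert_self _ _)
      set P : PowerSeries ℤ := ∏ j ∈ s, (1 - (PowerSeries.X : PowerSeries ℤ) ^ m j) with hP
      have key : ∀ i : ℕ, PowerSeries.coeff i
          (∏ j ∈ insert b s, (1 - (PowerSeries.X : PowerSeries ℤ) ^ m j))
          = PowerSeries.coeff i P -
            (if m b ≤ i then PowerSeries.coeff (i - m b) P else 0) := by
        intro i
        rw [Finset.prod_insert hb, sub_mul, one_mul, map_sub, ← hP,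
          mul_comm (PowerSeries.X ^ m b), PowerSeries.coeff_mul_X_pow']
      refine ⟨?_, ?_, ?_⟩
      · rw [key, ih0, if_neg (by omega)]; ring
      · intro i hi hia
        rw [key, ihmid i hi hia, if_neg (by omega)]; ring
      · rw [key]
        by_cases hba : m b = a
        · rw [if_pos (by omega), hba, Nat.sub_self, ih0, iha,
            Finset.filter_insert, if_pos hba, Finset.card_insert_of_notMem (by simp [hb])]
          push_cast; ring
        · rw [if_neg (by omega), iha, Finset.filter_insert, if_neg hba]; ring

lemma aux_sum_ge_char {α : Type*} [DecidableEq α] (a : ℕ) (ha : 0 < a) (U : Finset α)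
    (f : α → ℕ) (hf : ∀ j ∈ U, a ≤ f j) :
    (∑ j ∈ U, f j < a → U = ∅) ∧
    (∑ j ∈ U, f j = a ↔ ∃ j, U = {j} ∧ f j = a) := by
  constructor
  · intro h
    by_contra hne
    obtain ⟨j, hj⟩ := Finset.nonempty_iff_ne_empty.mpr hne
    exact absurd (le_trans (hf j hj)
      (Finset.single_le_sum (fun i _ => Nat.zero_le _) hj)) (by omega)
  · constructor
    · intro h
      have hne : U.Nonempty := by
        by_contra hne
        rw [Finset.not_nonempty_iff_eq_empty.mp hne] at h
        simp at h; omega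
      obtain ⟨j, hj⟩ := hne
      rw [← Finset.add_sum_erase U f hj] at h
      have h2 : ∑ i ∈ U.erase j, f i = 0 := by
        have := hf j hj; omega
      have h3 : U.erase j = ∅ := by
        by_contra hne2
        obtain ⟨j', hj'⟩ := Finset.nonempty_iff_ne_empty.mpr hne2
        have := Finset.single_le_sum (f := f) (fun i _ => Nat.zero_le _) hj'
        have := hf j' (Finset.mem_of_mem_erase hj')
        omega
      refine ⟨j, ?_, by omega⟩
      have := Finset.insert_erase hj
      rw [← this, h3]; rfl
    · rintro ⟨j, rfl, hja⟩
      simp [hja]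

variable {n : ℕ} (w : Fin n → ℤ)

/-- the negative-index set -/
def Nset : Finset (Fin n) := (univ : Finset (Fin n)).filter fun j => w j < 0

/-- `N ∆ {j}` -/
def symmj (j : Fin n) : Finset (Fin n) :=
  if j ∈ Nset w then (Nset w).erase j else insert j (Nset w)

lemma aux_ES_eq (hw : ∀ j, w j ≠ 0) (S : Finset (Fin n)) :
    (∑ j ∈ S, w j) + (∑ j ∈ Nset w, -(w j))
      = ((∑ j ∈ (S \ Nset w) ∪ (Nset w \ S), (w j).natAbs : ℕ) : ℤ) := by
  have h1 : ∑ j ∈ S ∩ Nset w, w j + ∑ j ∈ S \ Nset w, w j = ∑ j ∈ S, w j :=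
    Finset.sum_inter_add_sum_sdiff S (Nset w) w
  have h2 : ∑ j ∈ Nset w ∩ S, (-(w j)) + ∑ j ∈ Nset w \ S, (-(w j))
      = ∑ j ∈ Nset w, -(w j) :=
    Finset.sum_inter_add_sum_sdiff (Nset w) S _
  rw [← h1, ← h2, Finset.inter_comm (Nset w) S]
  have h3 : ∑ j ∈ S ∩ Nset w, w j + ∑ j ∈ S ∩ Nset w, (-(w j)) = 0 := by
    rw [← Finset.sum_add_distrib]; simp
  rw [Finset.sum_union disjoint_sdiff_sdiff, Nat.cast_add, Nat.cast_sum, Nat.cast_sum]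
  have h4 : ∑ j ∈ S \ Nset w, w j = ∑ j ∈ S \ Nset w, ((w j).natAbs : ℤ) := by
    refine Finset.sum_congr rfl fun j hj => ?_
    have hj' : ¬ (w j < 0) := by
      have := (Finset.mem_sdiff.mp hj).2
      simpa [Nset] using this
    have := hw j; omega
  have h5 : ∑ j ∈ Nset w \ S, (-(w j)) = ∑ j ∈ Nset w \ S, ((w j).natAbs : ℤ) := by
    refine Finset.sum_congr rfl fun j hj => ?_
    have hj' : w j < 0 := by
      have := (Finset.mem_sdiff.mp hj).1
      simpa [Nset] using this
    omega
  rw [← h4, ← h5]; ring_nf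
  omega

lemma aux_symmdiff_symmj (j : Fin n) :
    (symmj w j \ Nset w) ∪ (Nset w \ symmj w j) = {j} := by
  unfold symmj
  by_cases hj : j ∈ Nset w
  · rw [if_pos hj]
    ext x
    simp only [Finset.mem_union, Finset.mem_sdiff, Finset.mem_erase, Finset.mem_singleton]
    constructor
    · rintro (⟨⟨_, h⟩, h2⟩ | ⟨h1, h2⟩)
      · exact absurd h h2
      · by_contra hne; exact h2 ⟨hne, h1⟩
    · rintro rfl; right; exact ⟨hj, fun h => h.1 rfl⟩
  · rw [if_neg hj]
    ext x
    simp only [Finset.mem_union, Finset.mem_sdiff, Finset.mem_insert, Finset.mem_singleton]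
    constructor
    · rintro (⟨h1 | h1, h2⟩ | ⟨h1, h2⟩)
      · exact h1
      · exact absurd h1 h2
      · exact absurd (Or.inr h1) h2
    · rintro rfl; left; exact ⟨Or.inl rfl, hj⟩

lemma aux_symmdiff_eq_singleton_iff (S : Finset (Fin n)) (j : Fin n) :
    (S \ Nset w) ∪ (Nset w \ S) = {j} ↔ S = symmj w j := by
  constructor
  · intro h
    have h' : ∀ x, ((x ∈ S ∧ x ∉ Nset w) ∨ (x ∈ Nset w ∧ x ∉ S)) ↔ x = j := by
      intro x
      have := Finset.ext_iff.mp h x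
      simpa [Finset.mem_union, Finset.mem_sdiff] using this
    ext x
    by_cases hj : j ∈ Nset w <;>
      simp only [symmj, if_pos, if_neg, hj, if_true, if_false, Finset.mem_erase,
        Finset.mem_insert] <;>
    · have := h' x
      by_cases hx : x = j <;> by_cases hxN : x ∈ Nset w <;> simp_all
  · rintro rfl
    exact aux_symmdiff_symmj w j

lemma aux_symmj_injective : Function.Injective (symmj w) := by
  intro j j' h
  have h1 := aux_symmdiff_symmj w j
  have h2 := aux_symmdiff_symmj w j'
  rw [h] at h1
  rw [h1] at h2
  exact Finset.singleton_injective h2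

lemma aux_count_a (a : ℕ) (ha : 0 < a) (k : ℕ) :
    ((univ : Finset (Fin n)).filter fun j =>
        (w j).natAbs = a ∧ (symmj w j).card = k)
      = ((univ : Finset (Fin n)).filter fun j => w j = (a:ℤ) ∧ (Nset w).card + 1 = k)
        ∪ ((univ : Finset (Fin n)).filter fun j => w j = -(a:ℤ) ∧ (Nset w).card = k + 1) := by
  ext j
  simp only [Finset.mem_filter, Finset.mem_union, Finset.mem_univ, true_and]
  have hjN : j ∈ Nset w ↔ w j < 0 := by simp [Nset]
  by_cases hj : w j < 0
  · have hjN' : j ∈ Nset w := hjN.mpr hj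
    have hcard : (symmj w j).card = (Nset w).card - 1 := by
      rw [symmj, if_pos hjN', Finset.card_erase_of_mem hjN']
    have hpos : 1 ≤ (Nset w).card := Finset.card_pos.mpr ⟨j, hjN'⟩
    rw [hcard]
    omega
  · have hjN' : j ∉ Nset w := fun h => hj (hjN.mp h)
    have hcard : (symmj w j).card = (Nset w).card + 1 := by
      rw [symmj, if_neg hjN', Finset.card_insert_of_notMem hjN']
    rw [hcard]
    omega

end Aux

/-- the low-order Taylor coefficients of the local contribution of
a fixed point of index `2λ` in the proof of Proposition 2.2.  Here
`w_1,…,w_n` are nonzero integers of absolute value at least `a > 0`,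
`λ = #{j : w_j < 0}`, `ν(a) = #{j : w_j = a}`, `ν(-a) = #{j : w_j = -a}`,
and `k ≤ n`.  In `ℤ⟦t⟧`, the element `∏_j (1 - t^{|w_j|})` has constant
coefficient `1`, hence is a unit; `F ∈ ℤ[t]` is the polynomial whose
coefficients agree with those of the Laurent polynomial
`e_k(t^{w_1},…,t^{w_n}) · ∏_{w_j<0} t^{-w_j}`, and
`G = F · (∏_j (1 - t^{|w_j|}))⁻¹`.  Then the coefficient of `t^0` in `G` is
`1` if `λ = k` and `0` otherwise, the coefficients of `t^i` for `0 < i < a`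
vanish, and the coefficient of `t^a` in `G` is `ν(a)` if `λ = k - 1`, is
`ν(a) + ν(-a)` if `λ = k`, is `ν(-a)` if `λ = k + 1`, and is `0` otherwise. -/
theorem power_series_local_contribution_coeffs
    (a : ℕ) (ha : 0 < a) (n : ℕ) (hn : 0 < n) (w : Fin n → ℤ)
    (hw : ∀ j, w j ≠ 0 ∧ (a : ℤ) ≤ |w j|) (k : ℕ) (hk : k ≤ n)
    (F : Polynomial ℤ)
    (hF : ∀ i : ℕ, F.coeff i =
      ((∑ S ∈ (univ : Finset (Fin n)).powersetCard k, ∏ j ∈ S, T (w j)) *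
        ∏ j ∈ (univ : Finset (Fin n)).filter fun j => w j < 0,
          T (-(w j)) : LaurentPolynomial ℤ).coeff (i : ℤ)) :
    let lam : ℕ := ((univ : Finset (Fin n)).filter fun j => w j < 0).card
    let nua : ℤ := (((univ : Finset (Fin n)).filter fun j => w j = (a : ℤ)).card : ℤ)
    let numa : ℤ := (((univ : Finset (Fin n)).filter fun j => w j = -(a : ℤ)).card : ℤ)
    let D : PowerSeries ℤ := ∏ j : Fin n, (1 - (PowerSeries.X : PowerSeries ℤ) ^ (w j).natAbs)
    let G : PowerSeries ℤ := (F : PowerSeries ℤ) * Ring.inverse D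
    PowerSeries.constantCoeff D = 1 ∧ IsUnit D ∧
      (PowerSeries.coeff 0 G = if lam = k then 1 else 0) ∧
      (∀ i : ℕ, 0 < i → i < a → PowerSeries.coeff i G = 0) ∧
      ((lam + 1 = k → PowerSeries.coeff a G = nua) ∧
        (lam = k → PowerSeries.coeff a G = nua + numa) ∧
        (lam = k + 1 → PowerSeries.coeff a G = numa) ∧
        (lam + 1 ≠ k ∧ lam ≠ k ∧ lam ≠ k + 1 → PowerSeries.coeff a G = 0)) := by
  intro lam nua numa D G
  have hwne : ∀ j, w j ≠ 0 := fun j => (hw j).1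
  have hwabs : ∀ j, a ≤ (w j).natAbs := fun j => by
    have h1 := (hw j).2
    have h2 : |w j| = ((w j).natAbs : ℤ) := Int.abs_eq_natAbs _
    omega
  have hlam : lam = (Nset w).card := rfl
  have hnua : nua = (((univ : Finset (Fin n)).filter fun j => w j = (a:ℤ)).card : ℤ) := rfl
  have hnuma : numa = (((univ : Finset (Fin n)).filter fun j => w j = -(a:ℤ)).card : ℤ) := rfl
  -- F coefficients as counting sums
  have hFc : ∀ i : ℕ, F.coeff i = ∑ S ∈ (univ : Finset (Fin n)).powersetCard k,
      (if ((∑ j ∈ S, w j) + ∑ j ∈ Nset w, -(w j)) = (i : ℤ) then (1:ℤ) else 0) := by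
    intro i; rw [hF i, aux_coeffL]; rfl
  -- key characterizations of the exponent
  have hchar := fun (S : Finset (Fin n)) =>
    aux_sum_ge_char a ha ((S \ Nset w) ∪ (Nset w \ S)) (fun j => (w j).natAbs)
      (fun j _ => hwabs j)
  -- F coeff 0
  have hF0 : F.coeff 0 = if lam = k then 1 else 0 := by
    rw [hFc 0]
    have heq : ∀ S ∈ (univ : Finset (Fin n)).powersetCard k,
        (if ((∑ j ∈ S, w j) + ∑ j ∈ Nset w, -(w j)) = ((0:ℕ) : ℤ) then (1:ℤ) else 0)
        = if S = Nset w then 1 else 0 := by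
      intro S _
      have : ((∑ j ∈ S, w j) + ∑ j ∈ Nset w, -(w j)) = ((0:ℕ) : ℤ) ↔ S = Nset w := by
        rw [aux_ES_eq w hwne S, Nat.cast_inj]
        constructor
        · intro h
          have hU := (hchar S).1 (by omega)
          have := Finset.union_eq_empty.mp hU
          exact Finset.Subset.antisymm
            (Finset.sdiff_eq_empty_iff_subset.mp this.1)
            (Finset.sdiff_eq_empty_iff_subset.mp this.2)
        · intro h; subst h; simp
      exact if_congr this rfl rfl
    rw [Finset.sum_congr rfl heq, Finset.sum_ite_eq' _ (Nset w) (fun _ => (1:ℤ))]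
    simp only [Finset.mem_powersetCard_univ]
    rw [hlam]
  -- F coeff mid
  have hFmid : ∀ i : ℕ, 0 < i → i < a → F.coeff i = 0 := by
    intro i hi hia
    rw [hFc i]
    refine Finset.sum_eq_zero fun S _ => if_neg fun h => ?_
    rw [aux_ES_eq w hwne S, Nat.cast_inj] at h
    have hU := (hchar S).1 (by omega)
    rw [hU] at h
    simp at h
    omega
  -- F coeff a
  have hFa : F.coeff a = (if lam + 1 = k then nua else 0) +
      (if lam = k + 1 then numa else 0) := by
    rw [hFc a]
    have heq : ∀ S ∈ (univ : Finset (Fin n)).powersetCard k,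
        (if ((∑ j ∈ S, w j) + ∑ j ∈ Nset w, -(w j)) = ((a:ℕ) : ℤ) then (1:ℤ) else 0)
        = if (∃ j, S = symmj w j ∧ (w j).natAbs = a) then 1 else 0 := by
      intro S _
      have h1 : ((∑ j ∈ S, w j) + ∑ j ∈ Nset w, -(w j)) = ((a:ℕ) : ℤ) ↔
          (∃ j, S = symmj w j ∧ (w j).natAbs = a) := by
        rw [aux_ES_eq w hwne S, Nat.cast_inj, (hchar S).2]
        exact exists_congr fun j =>
          and_congr_left fun _ => aux_symmdiff_eq_singleton_iff w S j
      exact if_congr h1 rfl rfl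
    rw [Finset.sum_congr rfl heq, Finset.sum_boole]
    have himg : ((univ : Finset (Fin n)).powersetCard k).filter
          (fun S => ∃ j, S = symmj w j ∧ (w j).natAbs = a)
        = ((univ : Finset (Fin n)).filter fun j =>
            (w j).natAbs = a ∧ (symmj w j).card = k).image (symmj w) := by
      ext S
      simp only [Finset.mem_filter, Finset.mem_image, Finset.mem_powersetCard_univ,
        Finset.mem_univ, true_and]
      constructor
      · rintro ⟨hcard, j, rfl, hj⟩
        exact ⟨j, ⟨hj, hcard⟩, rfl⟩
      · rintro ⟨j, ⟨hj, hc⟩, rfl⟩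
        exact ⟨hc, j, rfl, hj⟩
    rw [himg, Finset.card_image_of_injective _ (aux_symmj_injective w),
      aux_count_a w a ha k, Finset.card_union_of_disjoint (by
        rw [Finset.disjoint_left]
        intro j hj hj'
        simp only [Finset.mem_filter] at hj hj'
        omega)]
    have e1 : (((univ : Finset (Fin n)).filter fun j =>
          w j = (a:ℤ) ∧ (Nset w).card + 1 = k).card : ℤ)
        = if lam + 1 = k then nua else 0 := by
      by_cases h : (Nset w).card + 1 = k
      · rw [if_pos (by rw [hlam]; exact h), hnua]; simp [h]
      · rw [if_neg (by rw [hlam]; exact h)]; simp [h]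
    have e2 : (((univ : Finset (Fin n)).filter fun j =>
          w j = -(a:ℤ) ∧ (Nset w).card = k + 1).card : ℤ)
        = if lam = k + 1 then numa else 0 := by
      by_cases h : (Nset w).card = k + 1
      · rw [if_pos (by rw [hlam]; exact h), hnuma]; simp [h]
      · rw [if_neg (by rw [hlam]; exact h)]; simp [h]
    rw [Nat.cast_add, e1, e2]
  -- power series side
  obtain ⟨hD0, hDmid, hDa⟩ :=
    aux_coeff_prodD ha (univ : Finset (Fin n)) (fun j => (w j).natAbs) (fun j _ => hwabs j)
  have hD0' : PowerSeries.constantCoeff D = 1 := by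
    rw [← PowerSeries.coeff_zero_eq_constantCoeff_apply]; exact hD0
  have hU : IsUnit D := PowerSeries.isUnit_iff_constantCoeff.mpr (by
    rw [hD0']; exact isUnit_one)
  have hGD : G * D = (F : PowerSeries ℤ) := by
    show ((F : PowerSeries ℤ) * Ring.inverse D) * D = _
    rw [mul_assoc, Ring.inverse_mul_cancel _ hU, mul_one]
  have hFG : ∀ i : ℕ, (F.coeff i : ℤ) = ∑ p ∈ Finset.HasAntidiagonal.antidiagonal i,
      (PowerSeries.coeff p.1 G) * (PowerSeries.coeff p.2 D) := by
    intro i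
    rw [← Polynomial.coeff_coe, ← hGD, PowerSeries.coeff_mul]
  -- G coeff 0
  have hG0 : PowerSeries.coeff 0 G = if lam = k then 1 else 0 := by
    have h := hFG 0
    rw [Finset.Nat.antidiagonal_zero, Finset.sum_singleton] at h
    rw [← hF0]
    rw [h, hD0, mul_one]
  -- G coeff mid
  have hGmid : ∀ i : ℕ, 0 < i → i < a → PowerSeries.coeff i G = 0 := by
    intro i hi hia
    have h := hFG i
    rw [Finset.sum_eq_single (i, 0)] at h
    · rw [hFmid i hi hia] at h
      rw [hD0, mul_one] at h
      exact h.symm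
    · rintro ⟨p, q⟩ hpq hne
      rw [Finset.HasAntidiagonal.mem_antidiagonal] at hpq
      have hq : 0 < q := by
        rcases Nat.eq_zero_or_pos q with h0 | h0
        · exact absurd (by simp [h0] at hpq ⊢; omega : (p, q) = (i, 0)) hne
        · exact h0
      rw [hDmid q hq (by omega), mul_zero]
    · intro hmem
      exact absurd (Finset.HasAntidiagonal.mem_antidiagonal.mpr (by simp)) hmem
  -- G coeff a
  have hGa : PowerSeries.coeff a G = F.coeff a +
      (if lam = k then 1 else 0) * (nua + numa) := by
    have h := hFG a
    have h1 : ((a, 0) : ℕ × ℕ) ∈ Finset.HasAntidiagonal.antidiagonal a := by simp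
    rw [← Finset.add_sum_erase _ _ h1] at h
    have h2 : ((0, a) : ℕ × ℕ) ∈ (Finset.HasAntidiagonal.antidiagonal a).erase (a, 0) := by
      simp [Finset.mem_erase, Prod.ext_iff]
      omega
    rw [← Finset.add_sum_erase _ _ h2] at h
    have h3 : ∑ p ∈ ((Finset.HasAntidiagonal.antidiagonal a).erase (a, 0)).erase (0, a),
        (PowerSeries.coeff p.1 G) * (PowerSeries.coeff p.2 D) = 0 := by
      refine Finset.sum_eq_zero ?_
      rintro ⟨p, q⟩ hpq
      rw [Finset.mem_erase, Finset.mem_erase, Finset.HasAntidiagonal.mem_antidiagonal] at hpq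
      obtain ⟨hne1, hne2, hsum⟩ := hpq
      have hq : 0 < q ∧ q < a := by
        constructor
        · rcases Nat.eq_zero_or_pos q with h0 | h0
          · exact absurd (by simp [h0] at hsum ⊢; omega : (p, q) = (a, 0)) hne2
          · exact h0
        · rcases Nat.lt_or_ge q a with h0 | h0
          · exact h0
          · exact absurd (by simp [Prod.ext_iff]; omega : (p, q) = (0, a)) hne1
      rw [hDmid q hq.1 hq.2, mul_zero]
    rw [h3, add_zero, hD0, mul_one, hDa] at h
    have hcardsplit : (((univ : Finset (Fin n)).filter fun j => (w j).natAbs = a).card : ℤ)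
        = nua + numa := by
      have hset : ((univ : Finset (Fin n)).filter fun j => (w j).natAbs = a)
          = ((univ : Finset (Fin n)).filter fun j => w j = (a:ℤ))
            ∪ ((univ : Finset (Fin n)).filter fun j => w j = -(a:ℤ)) := by
        ext j
        simp only [Finset.mem_filter, Finset.mem_union, Finset.mem_univ, true_and]
        omega
      rw [hset, Finset.card_union_of_disjoint (by
        rw [Finset.disjoint_left]
        intro j hj hj'
        simp only [Finset.mem_filter] at hj hj'
        omega)]
      push_cast
      rw [hnua, hnuma]
    rw [hcardsplit] at h
    have h' : F.coeff a = PowerSeries.coeff a G +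
        PowerSeries.coeff 0 G * -(nua + numa) := h
    rw [hG0] at h'
    linarith [h']
  refine ⟨hD0', hU, hG0, hGmid, ?_, ?_, ?_, ?_⟩
  · intro h
    rw [hGa, hFa, if_pos h, if_neg (by omega), if_neg (by omega)]
    ring
  · intro h
    rw [hGa, hFa, if_pos h, if_neg (by omega), if_neg (by omega)]
    ring
  · intro h
    rw [hGa, hFa, if_pos h, if_neg (by omega), if_neg (by omega)]
    ring
  · rintro ⟨h1, h2, h3⟩
    rw [hGa, hFa, if_neg h1, if_neg h3, if_neg h2]
    ring
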